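/- Let $\mathcal{L}$ be a full-rank lattice in $\mathbb{R}^n$ and let $\varepsilon = 2^{-2n}$. Then the smoothing parameter satisfies $\eta_{\varepsilon}(\mathcal{L}) \leq \sqrt{n}/\lambda_1(\mathcal{L}^{\vee})$, i.e., for $s = \sqrt{n}/\lambda_1(\mathcal{L}^{\vee})$ one has $\sum_{y \in \mathcal{L}^{\vee}\setminus\{0\}} \exp(-\pi s^2 \|y\|^2) \leq 2^{-2n}$. -/

import Mathlib

open MeasureTheory Metric

lemma packing_bound {n : ℕ} (hn : 0 < n) (lam R : ℝ) (hl : 0 < lam) (hR : 0 ≤ R)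
    (S : Finset (EuclideanSpace ℝ (Fin n)))
    (hsep : ∀ p ∈ S, ∀ q ∈ S, p ≠ q → lam ≤ dist p q)
    (hnorm : ∀ p ∈ S, ‖p‖ ≤ R) :
    (S.card : ℝ) * (lam / 2) ^ n ≤ (R + lam / 2) ^ n := by
  have : Nontrivial (EuclideanSpace ℝ (Fin n)) := by
    refine ⟨EuclideanSpace.single ⟨0, hn⟩ (1:ℝ), 0, ?_⟩
    intro h
    have := congrFun (congrArg (fun x : EuclideanSpace ℝ (Fin n) => (x : Fin n → ℝ)) h) ⟨0, hn⟩
    simpa [EuclideanSpace.single] using this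
  have hdisj : (↑S : Set (EuclideanSpace ℝ (Fin n))).PairwiseDisjoint
      (fun p => ball p (lam / 2)) := by
    intro p hp q hq hpq
    exact ball_disjoint_ball (by linarith [hsep p hp q hq hpq])
  have hmeas := measure_biUnion_finset (μ := volume) hdisj (fun b _ => measurableSet_ball)
  have hsub : (⋃ p ∈ S, ball p (lam / 2)) ⊆ ball (0 : EuclideanSpace ℝ (Fin n)) (R + lam / 2) := by
    intro x hx
    simp only [Set.mem_iUnion] at hx
    obtain ⟨p, hp, hxp⟩ := hx
    rw [mem_ball] at hxp ⊢
    calc dist x 0 ≤ dist x p + dist p 0 := dist_triangle _ _ _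
      _ < lam / 2 + R := by
          have h2 : dist p 0 ≤ R := by rw [dist_zero_right]; exact hnorm p hp
          linarith
      _ = R + lam / 2 := by ring
  have hle : volume (⋃ p ∈ S, ball p (lam / 2)) ≤ volume (ball (0 : EuclideanSpace ℝ (Fin n)) (R + lam / 2)) :=
    measure_mono hsub
  rw [hmeas] at hle
  have hball : ∀ p : EuclideanSpace ℝ (Fin n),
      volume (ball p (lam / 2)) = ENNReal.ofReal ((lam / 2) ^ n) * volume (ball (0 : EuclideanSpace ℝ (Fin n)) 1) := by
    intro p
    rw [Measure.addHaar_ball volume p (by linarith)]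
    simp [finrank_euclideanSpace_fin]
  have hbig : volume (ball (0 : EuclideanSpace ℝ (Fin n)) (R + lam / 2))
      = ENNReal.ofReal ((R + lam / 2) ^ n) * volume (ball (0 : EuclideanSpace ℝ (Fin n)) 1) := by
    rw [Measure.addHaar_ball volume _ (by linarith)]
    simp [finrank_euclideanSpace_fin]
  simp only [hball, Finset.sum_const, nsmul_eq_mul, hbig] at hle
  rw [← mul_assoc, ENNReal.mul_le_mul_iff_left (measure_ball_pos volume _ one_pos).ne'
    measure_ball_lt_top.ne] at hle
  have : ENNReal.ofReal ((S.card : ℝ) * (lam / 2) ^ n) ≤ ENNReal.ofReal ((R + lam / 2) ^ n) := by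
    rwa [ENNReal.ofReal_mul (by positivity), ENNReal.ofReal_natCast]
  rwa [ENNReal.ofReal_le_ofReal_iff (by positivity)] at this


lemma aux_exp_pi : (22:ℝ) ≤ Real.exp Real.pi := by
  have h1 : (3.141592:ℝ) ≤ Real.pi := le_of_lt Real.pi_gt_d6
  have h2 : Real.exp 3.141592 ≤ Real.exp Real.pi := Real.exp_le_exp.mpr h1
  have h3 : Real.exp 3.141592 = Real.exp 3 * Real.exp 0.141592 := by
    rw [← Real.exp_add]; norm_num
  have h4 : Real.exp 3 = Real.exp 1 ^ 3 := by
    rw [← Real.exp_nat_mul]; norm_num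
  have h5 : (2.7182818283:ℝ) ^ 3 ≤ Real.exp 1 ^ 3 :=
    pow_le_pow_left₀ (by norm_num) (le_of_lt Real.exp_one_gt_d9) 3
  have h6 : (1.141592:ℝ) ≤ Real.exp 0.141592 := by
    have := Real.add_one_le_exp (0.141592:ℝ); linarith
  have h7 : (0:ℝ) < Real.exp 0.141592 := Real.exp_pos _
  nlinarith [Real.exp_pos (3:ℝ)]

lemma aux_lin : ∀ k : ℕ, (8*k+12:ℝ) ≤ 14 * 2^k := by
  intro k
  induction k with
  | zero => norm_num
  | succ m ih =>
    have h2 : (1:ℝ) ≤ 2^m := one_le_pow₀ (by norm_num)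
    push_cast [pow_succ] at *
    nlinarith

lemma aux_ck_le (k : ℕ) (hk : 1 ≤ k) :
    (8*k+12:ℝ) * Real.exp (-(Real.pi * (k:ℝ)^2)) ≤ 0.91 * (1/20:ℝ)^(k-1) := by
  have hexpk : (22:ℝ)^(k^2) ≤ Real.exp (Real.pi * (k:ℝ)^2) := by
    have : Real.exp (Real.pi * (k:ℝ)^2) = Real.exp Real.pi ^ (k^2) := by
      rw [← Real.exp_nat_mul]; push_cast; ring_nf
    rw [this]
    exact pow_le_pow_left₀ (by norm_num) aux_exp_pi _
  rw [Real.exp_neg, mul_comm ((8*k+12:ℝ)) _, inv_mul_le_iff₀ (Real.exp_pos _)]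
  rcases Nat.lt_or_ge k 2 with hk2 | hk2
  · interval_cases k
    have h := hexpk
    norm_num at h ⊢
    nlinarith
  · obtain ⟨m, rfl⟩ : ∃ m, k = m + 2 := ⟨k - 2, by omega⟩
    have hlin := aux_lin (m+2)
    have h40 : (40:ℝ)^m ≤ 484^m := pow_le_pow_left₀ (by norm_num) (by norm_num) m
    have h22 : (22:ℝ)^(2*(m+2)) ≤ 22^((m+2)^2) := by
      apply pow_le_pow_right₀ (by norm_num); nlinarith
    have hmain : (8*(m+2:ℕ)+12:ℝ) * (20:ℝ)^(m+1) ≤ 0.91 * 22^(2*(m+2)) := by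
      have e1 : (22:ℝ)^(2*(m+2)) = 484^(m+2) := by
        rw [pow_mul]; norm_num
      rw [e1]
      have e3 : (20:ℝ)^(m+1) = 20 * 20^m := by ring
      have h20 : (0:ℝ) < 20^m := by positivity
      have hcast : (8*((m:ℝ)+2)+12) ≤ 14 * 2^(m+2) := by push_cast at hlin ⊢; linarith
      have hprod : (2:ℝ)^m * 20^m = 40^m := by
        rw [← mul_pow]; norm_num
      push_cast
      rw [e3]
      calc (8*((m:ℝ)+2)+12) * (20 * 20^m) ≤ (14 * 2^(m+2)) * (20*20^m) := by
            apply mul_le_mul_of_nonneg_right hcast; positivity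
        _ = 1120 * (2^m * 20^m) := by ring
        _ = 1120 * 40^m := by rw [hprod]
        _ ≤ 0.91 * (234256 * 484^m) := by nlinarith [h40, pow_nonneg (by norm_num : (0:ℝ) ≤ 484) m]
        _ = 0.91 * 484^(m+2) := by ring
    have hfin : (0.91:ℝ) * 22^(2*(m+2)) ≤ 0.91 * Real.exp (Real.pi * ((m+2:ℕ):ℝ)^2) := by
      have := le_trans h22 hexpk; nlinarith
    have h := hmain.trans hfin
    have h20pos : (0:ℝ) < (20:ℝ)^(m+1) := by positivity
    have h2 : (8*((m+2:ℕ):ℝ)+12) ≤ (0.91 * Real.exp (Real.pi * ((m+2:ℕ):ℝ)^2)) / 20^(m+1) :=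
      (le_div_iff₀ h20pos).mpr h
    calc (8*((m+2:ℕ):ℝ)+12) ≤ (0.91 * Real.exp (Real.pi * ((m+2:ℕ):ℝ)^2)) / 20^(m+1) := h2
      _ = Real.exp (Real.pi * ((m+2:ℕ):ℝ)^2) * (0.91 * (1/20)^(m+2-1)) := by
          rw [show m+2-1 = m+1 from rfl]; simp only [one_div, inv_pow]; ring

noncomputable def auxD : ℕ → ℝ := fun k => if k = 0 then 0 else 0.91 * (1/20:ℝ)^(k-1)

lemma auxD_nonneg (k : ℕ) : 0 ≤ auxD k := by
  unfold auxD; split <;> positivity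

lemma auxD_summable : Summable auxD := by
  have hg : Summable (fun k : ℕ => (18.2:ℝ) * (1/20)^k) :=
    (summable_geometric_of_lt_one (by norm_num) (by norm_num)).mul_left _
  have hle : ∀ k : ℕ, auxD k ≤ (18.2:ℝ) * (1/20)^k := by
    intro k
    unfold auxD
    split
    · positivity
    · rename_i hk
      obtain ⟨m, rfl⟩ : ∃ m, k = m + 1 := ⟨k-1, by omega⟩
      simp only [Nat.add_sub_cancel]
      rw [pow_succ]
      nlinarith [pow_nonneg (by norm_num : (0:ℝ) ≤ 1/20) m]
  exact Summable.of_nonneg_of_le auxD_nonneg hle hg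

lemma auxD_tsum_le : ∑' k, auxD k ≤ 1 := by
  rw [Summable.tsum_eq_zero_add auxD_summable]
  have h0 : auxD 0 = 0 := rfl
  have h1 : ∀ k : ℕ, auxD (k+1) = 0.91 * (1/20:ℝ)^k := by
    intro k; unfold auxD; simp
  simp only [h0, h1, zero_add]
  rw [tsum_mul_left, tsum_geometric_of_lt_one (by norm_num) (by norm_num)]
  norm_num

lemma aux_sum (K : Finset ℕ) (hK : ∀ k ∈ K, 1 ≤ k) :
    ∑ k ∈ K, (8*k+12:ℝ) * Real.exp (-(Real.pi * (k:ℝ)^2)) ≤ 1 := by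
  calc ∑ k ∈ K, (8*k+12:ℝ) * Real.exp (-(Real.pi * (k:ℝ)^2))
      ≤ ∑ k ∈ K, auxD k := by
        apply Finset.sum_le_sum
        intro k hk
        have hk1 := hK k hk
        have h := aux_ck_le k hk1
        unfold auxD
        rw [if_neg (by omega : ¬ k = 0)]
        exact h
    _ ≤ ∑' k, auxD k := Summable.sum_le_tsum K (fun i _ => auxD_nonneg i) auxD_summable
    _ ≤ 1 := auxD_tsum_le


theorem smoothing_parameter_le (n : ℕ) (hn : 0 < n)
    (B : Matrix (Fin n) (Fin n) ℝ) (hB : IsUnit B.det)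
    (lam : ℝ)
    (hlam : IsLeast {r : ℝ | ∃ z : Fin n → ℤ, z ≠ 0 ∧
        Real.sqrt (∑ i, (B⁻¹.transpose.mulVec (fun i => (z i : ℝ)) i) ^ 2) = r} lam) :
    ∑' z : {z : Fin n → ℤ // z ≠ 0},
        Real.exp (-Real.pi * (Real.sqrt n / lam) ^ 2 *
          ∑ i, (B⁻¹.transpose.mulVec (fun i => ((z : Fin n → ℤ) i : ℝ)) i) ^ 2) ≤
      ((2 : ℝ) ^ (2 * n))⁻¹ := by
  classical
  set f : (Fin n → ℤ) → EuclideanSpace ℝ (Fin n) :=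
    fun z => (WithLp.equiv 2 (Fin n → ℝ)).symm (B⁻¹.transpose.mulVec (fun i => (z i : ℝ)))
    with hf
  have norm_f : ∀ z : Fin n → ℤ,
      ‖f z‖ = Real.sqrt (∑ i, (B⁻¹.transpose.mulVec (fun i => (z i : ℝ)) i) ^ 2) := by
    intro z
    rw [EuclideanSpace.norm_eq]
    congr 1
    apply Finset.sum_congr rfl
    intro i _
    rw [hf]
    simp [WithLp.equiv_symm_apply, PiLp.toLp_apply, Real.norm_eq_abs, sq_abs]
  -- kernel triviality
  have hker : ∀ v : Fin n → ℝ, B⁻¹.transpose.mulVec v = 0 → v = 0 := by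
    intro v hv
    have h2 := congrArg (fun w => B.transpose.mulVec w) hv
    simp only [Matrix.mulVec_mulVec, Matrix.mulVec_zero] at h2
    rwa [← Matrix.transpose_mul, Matrix.nonsing_inv_mul B hB, Matrix.transpose_one,
      Matrix.one_mulVec] at h2
  have hfzero : ∀ z : Fin n → ℤ, f z = 0 → z = 0 := by
    intro z hz
    have hv : B⁻¹.transpose.mulVec (fun i => (z i : ℝ)) = 0 := by
      funext i
      exact congrFun (congrArg (WithLp.equiv 2 (Fin n → ℝ)) hz) i
    have h4 := hker _ hv
    funext i
    have h5 := congrFun h4 i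
    rw [Pi.zero_apply] at h5 ⊢
    exact_mod_cast h5
  have hcast : ∀ z z' : Fin n → ℤ,
      (fun i => (((z - z') i : ℤ) : ℝ)) = (fun i => ((z i : ℤ) : ℝ)) - (fun i => ((z' i : ℤ) : ℝ)) := by
    intro z z'
    funext j
    simp [Pi.sub_apply]
  have hsub : ∀ z z' : Fin n → ℤ, f z - f z' = f (z - z') := by
    intro z z'
    ext i
    show f z i - f z' i = f (z - z') i
    rw [hf]
    simp only [WithLp.equiv_symm_apply, PiLp.toLp_apply]
    rw [hcast, Matrix.mulVec_sub]
    rfl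
  -- lam facts
  have lam_le : ∀ z : Fin n → ℤ, z ≠ 0 → lam ≤ ‖f z‖ := by
    intro z hz
    rw [norm_f]
    exact hlam.2 ⟨z, hz, rfl⟩
  have lam_pos : 0 < lam := by
    obtain ⟨z0, hz0, hz0eq⟩ := hlam.1
    have h1 : lam = ‖f z0‖ := by rw [norm_f]; exact hz0eq.symm
    rw [h1, norm_pos_iff]
    intro h
    exact hz0 (hfzero z0 h)
  -- rewrite target
  have hrhs : ((2 : ℝ) ^ (2 * n))⁻¹ = (1/4 : ℝ) ^ n := by
    rw [pow_mul, one_div, inv_pow]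
    norm_num
  rw [hrhs]
  apply tsum_le_of_sum_le' (by positivity)
  intro F
  -- shell index
  set kf : {z : Fin n → ℤ // z ≠ 0} → ℕ := fun z => ⌊‖f z.val‖ / lam⌋₊ with hkf
  have kf_ge : ∀ z : {z : Fin n → ℤ // z ≠ 0}, 1 ≤ kf z := by
    intro z
    apply Nat.le_floor
    rw [Nat.cast_one, le_div_iff₀ lam_pos, one_mul]
    exact lam_le z.val z.prop
  have kf_lb : ∀ z : {z : Fin n → ℤ // z ≠ 0}, (kf z : ℝ) * lam ≤ ‖f z.val‖ := by
    intro z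
    have h1 : (kf z : ℝ) ≤ ‖f z.val‖ / lam := Nat.floor_le (by positivity)
    calc (kf z : ℝ) * lam ≤ (‖f z.val‖ / lam) * lam := by nlinarith
      _ = ‖f z.val‖ := by field_simp
  have kf_ub : ∀ z : {z : Fin n → ℤ // z ≠ 0}, ‖f z.val‖ ≤ ((kf z : ℝ) + 1) * lam := by
    intro z
    have h1 : ‖f z.val‖ / lam < (kf z : ℝ) + 1 := Nat.lt_floor_add_one _
    have h2 : ‖f z.val‖ / lam * lam = ‖f z.val‖ := by field_simp
    nlinarith
  -- pointwise bound
  have hpt : ∀ z : {z : Fin n → ℤ // z ≠ 0},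
      Real.exp (-Real.pi * (Real.sqrt n / lam) ^ 2 *
        ∑ i, (B⁻¹.transpose.mulVec (fun i => ((z : Fin n → ℤ) i : ℝ)) i) ^ 2)
      ≤ Real.exp (-(Real.pi * (kf z : ℝ)^2)) ^ n := by
    intro z
    have hsq : (∑ i, (B⁻¹.transpose.mulVec (fun i => ((z : Fin n → ℤ) i : ℝ)) i) ^ 2)
        = ‖f z.val‖ ^ 2 := by
      rw [norm_f, Real.sq_sqrt]
      positivity
    rw [hsq, ← Real.exp_nat_mul]
    apply Real.exp_le_exp.mpr
    have hs : (Real.sqrt n / lam) ^ 2 = (n : ℝ) / lam ^ 2 := by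
      rw [div_pow, Real.sq_sqrt (by positivity)]
    rw [hs]
    have h1 : ((kf z : ℝ) * lam) ^ 2 ≤ ‖f z.val‖ ^ 2 :=
      pow_le_pow_left₀ (by positivity) (kf_lb z) 2
    have hlam2 : (0:ℝ) < lam ^ 2 := by positivity
    have h2 : (kf z : ℝ)^2 * lam^2 ≤ ‖f z.val‖^2 := by nlinarith
    have h3 : (kf z : ℝ)^2 ≤ ‖f z.val‖^2 / lam^2 := by
      rw [le_div_iff₀ hlam2]; exact h2
    have hn0 : (0:ℝ) ≤ (n:ℝ) := by positivity
    have h4 : (n:ℝ) * (kf z:ℝ)^2 ≤ (n:ℝ) * (‖f z.val‖^2/lam^2) := mul_le_mul_of_nonneg_left h3 hn0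
    have h5 := mul_le_mul_of_nonneg_left h4 Real.pi_pos.le
    have h6 : -Real.pi * ((n:ℝ) / lam ^ 2) * ‖f z.val‖ ^ 2
        = -(Real.pi * ((n:ℝ) * (‖f z.val‖ ^ 2 / lam ^ 2))) := by ring
    have h7 : (n:ℝ) * -(Real.pi * (kf z:ℝ)^2) = -(Real.pi * ((n:ℝ) * (kf z:ℝ)^2)) := by ring
    rw [h6, h7]
    linarith
  refine le_trans (Finset.sum_le_sum (fun z _ => hpt z)) ?_
  rw [← Finset.sum_fiberwise_of_maps_to (t := F.image kf)
    (fun z hz => Finset.mem_image_of_mem kf hz)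
    (fun z => Real.exp (-(Real.pi * (kf z : ℝ)^2)) ^ n)]
  have hinner : ∀ k ∈ F.image kf,
      ∑ z ∈ F.filter (fun z => kf z = k), Real.exp (-(Real.pi * (kf z : ℝ)^2)) ^ n
      ≤ (1/4:ℝ)^n * ((8*k+12:ℝ) * Real.exp (-(Real.pi * (k:ℝ)^2))) := by
    intro k hk
    obtain ⟨z0, hz0F, hz0k⟩ := Finset.mem_image.mp hk
    have hk1 : 1 ≤ k := hz0k ▸ kf_ge z0
    set Fk := F.filter (fun z => kf z = k) with hFk
    have hterm : ∀ z ∈ Fk, Real.exp (-(Real.pi * (kf z:ℝ)^2)) ^ n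
        = Real.exp (-(Real.pi * (k:ℝ)^2)) ^ n := by
      intro z hz
      rw [(Finset.mem_filter.mp hz).2]
    rw [Finset.sum_congr rfl hterm, Finset.sum_const, nsmul_eq_mul]
    -- cardinality bound via packing
    set S : Finset (EuclideanSpace ℝ (Fin n)) := Fk.image (fun z => f z.val) with hS
    have hinj : Set.InjOn (fun z : {z : Fin n → ℤ // z ≠ 0} => f z.val) Fk := by
      intro a _ b _ hab
      simp only at hab
      have h0 : f (a.val - b.val) = 0 := by
        rw [← hsub a.val b.val, hab, sub_self]
      exact Subtype.ext (sub_eq_zero.mp (hfzero _ h0))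
    have hcardS : S.card = Fk.card := Finset.card_image_of_injOn hinj
    have hsepS : ∀ p ∈ S, ∀ q ∈ S, p ≠ q → lam ≤ dist p q := by
      intro p hp q hq hpq
      obtain ⟨a, ha, rfl⟩ := Finset.mem_image.mp hp
      obtain ⟨b, hb, rfl⟩ := Finset.mem_image.mp hq
      have hab : a.val ≠ b.val := by
        intro h
        exact hpq (congrArg (fun v => f v) h)
      rw [dist_eq_norm, hsub]
      exact lam_le _ (sub_ne_zero.mpr hab)
    have hnormS : ∀ p ∈ S, ‖p‖ ≤ ((k:ℝ)+1) * lam := by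
      intro p hp
      obtain ⟨a, ha, rfl⟩ := Finset.mem_image.mp hp
      have h1 := kf_ub a
      rw [(Finset.mem_filter.mp ha).2] at h1
      exact h1
    have hpack := packing_bound hn lam (((k:ℝ)+1)*lam) lam_pos (by positivity) S hsepS hnormS
    have heq : ((k:ℝ)+1)*lam + lam/2 = (2*k+3) * (lam/2) := by ring
    rw [heq, mul_pow, hcardS] at hpack
    have hpow : (0:ℝ) < (lam/2)^n := by positivity
    have hcard : (Fk.card : ℝ) ≤ (2*(k:ℝ)+3)^n := le_of_mul_le_mul_right hpack hpow
    have hc1 : (8*(k:ℝ)+12) * Real.exp (-(Real.pi*(k:ℝ)^2)) ≤ 1 := by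
      have h2 := aux_ck_le k hk1
      have hp1 : ((1:ℝ)/20)^(k-1) ≤ 1 := pow_le_one₀ (by norm_num) (by norm_num)
      nlinarith
    calc (Fk.card:ℝ) * Real.exp (-(Real.pi*(k:ℝ)^2))^n
        ≤ (2*(k:ℝ)+3)^n * Real.exp (-(Real.pi*(k:ℝ)^2))^n :=
          mul_le_mul_of_nonneg_right hcard (by positivity)
      _ = ((2*(k:ℝ)+3) * Real.exp (-(Real.pi*(k:ℝ)^2)))^n := (mul_pow _ _ _).symm
      _ = (1/4:ℝ)^n * (((8*(k:ℝ)+12) * Real.exp (-(Real.pi*(k:ℝ)^2)))^n) := by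
          rw [← mul_pow]
          congr 1
          ring
      _ ≤ (1/4:ℝ)^n * ((8*(k:ℝ)+12) * Real.exp (-(Real.pi*(k:ℝ)^2))) := by
          apply mul_le_mul_of_nonneg_left _ (by positivity)
          exact pow_le_of_le_one (by positivity) hc1 hn.ne'
  refine le_trans (Finset.sum_le_sum hinner) ?_
  rw [← Finset.mul_sum]
  have hsum := aux_sum (F.image kf) (by
    intro k hk
    obtain ⟨z, hz, rfl⟩ := Finset.mem_image.mp hk
    exact kf_ge z)
  calc (1/4:ℝ)^n * ∑ k ∈ F.image kf, (8*(k:ℝ)+12) * Real.exp (-(Real.pi * (k:ℝ)^2))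
      ≤ (1/4:ℝ)^n * 1 := mul_le_mul_of_nonneg_left hsum (by positivity)
    _ = (1/4:ℝ)^n := mul_one _
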